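/- Under Protocol OR the permutation network spreads strictly more than the repeated path network: for N ≥ 8 agents, seed set S₀ = {j}, and all indices with 3 ≤ i ≤ N−3, j ∈ {2, …, i−2} ∪ {i+2, …, N−2}, and |i−j| > 2, the steady-state activation probability of agent i on the duplex permutation network 𝒢_P with all agents using Protocol OR strictly exceeds that on the duplex repeated path network 𝒢_R with all agents using Protocol OR: ℙ^{𝒢_P, OR}(i) > ℙ^{𝒢_R, OR}(i) = (3/4)^{|i−j|}. Equivalently, (3/4)^{|i−j|} + (1/2)(3/4)^{N−|i−j|−3} − (1/2)(3/4)^{N−5} > (3/4)^{|i−j|} whenever |i−j| > 2. -/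

import Mathlib

open MeasureTheory

inductive Protocol
  | OR
  | AND
deriving DecidableEq

noncomputable def ltmStep {n m : ℕ} (w : Fin m → Fin n → Fin n → ℝ)
    (u : Fin n → Protocol) (μ : Fin n → Fin m → ℝ)
    (A : Finset (Fin n)) : Finset (Fin n) :=
  A ∪ Finset.univ.filter fun i =>
    (u i = Protocol.OR ∧ ∃ k, μ i k < ∑ j ∈ A, w k i j) ∨
    (u i = Protocol.AND ∧ ∀ k, μ i k < ∑ j ∈ A, w k i j)

noncomputable def ltmSS {n m : ℕ} (w : Fin m → Fin n → Fin n → ℝ)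
    (u : Fin n → Protocol) (S₀ : Finset (Fin n))
    (μ : Fin n → Fin m → ℝ) : Finset (Fin n) :=
  (ltmStep w u μ)^[n] S₀

noncomputable def thMeasure (n m : ℕ) : Measure (Fin n → Fin m → ℝ) :=
  Measure.pi fun _ => Measure.pi fun _ => volume.restrict (Set.Icc (0:ℝ) 1)

noncomputable def pLTM {n m : ℕ} (w : Fin m → Fin n → Fin n → ℝ)
    (u : Fin n → Protocol) (S₀ : Finset (Fin n)) (i : Fin n) : ℝ :=
  (thMeasure n m {μ | i ∈ ltmSS w u S₀ μ}).toReal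

def lemStep {n m : ℕ} (S₀ : Finset (Fin n)) (u : Fin n → Protocol)
    (σ : Fin n → Fin m → Fin n) (A : Finset (Fin n)) : Finset (Fin n) :=
  S₀ ∪ A ∪ Finset.univ.filter fun i =>
    (u i = Protocol.OR ∧ ∃ k, σ i k ∈ A) ∨
    (u i = Protocol.AND ∧ ∀ k, σ i k ∈ A)

def UReachable {n m : ℕ} (S₀ : Finset (Fin n)) (u : Fin n → Protocol)
    (σ : Fin n → Fin m → Fin n) (i : Fin n) : Prop :=
  i ∈ (lemStep S₀ u σ)^[n] S₀

instance {n m : ℕ} (S₀ : Finset (Fin n)) (u : Fin n → Protocol)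
    (σ : Fin n → Fin m → Fin n) (i : Fin n) : Decidable (UReachable S₀ u σ i) := by
  unfold UReachable; infer_instance

noncomputable def rProb {n m : ℕ} (w : Fin m → Fin n → Fin n → ℝ)
    (S₀ : Finset (Fin n)) (u : Fin n → Protocol) (i : Fin n) : ℝ :=
  ∑ σ : Fin n → Fin m → Fin n,
    if UReachable S₀ u σ i then ∏ a : Fin n, ∏ k : Fin m, w k a (σ a k) else 0

noncomputable def casCen {n m : ℕ} (w : Fin m → Fin n → Fin n → ℝ)
    (u : Fin n → Protocol) (j : Fin n) : ℝ :=
  ∑ i : Fin n, pLTM w u {j} i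

noncomputable def pathW (N : ℕ) (i j : Fin N) : ℝ :=
  if j.val = i.val + 1 ∨ i.val = j.val + 1 then
    (if i.val = 0 ∨ i.val = N - 1 then 1 else 1/2)
  else 0

noncomputable def cycleW (N : ℕ) (i j : Fin N) : ℝ :=
  if (i.val + 1) % N = j.val ∨ (j.val + 1) % N = i.val then 1/2 else 0

noncomputable def permW2 (N : ℕ) (i j : Fin N) : ℝ :=
  if ((i.val + 1) % N = j.val ∨ (j.val + 1) % N = i.val) ∧
      ¬((i.val = N - 2 ∧ j.val = N - 1) ∨ (i.val = N - 1 ∧ j.val = N - 2)) then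
    (if i.val = N - 2 ∨ i.val = N - 1 then 1 else 1/2)
  else 0


section PBAux

open MeasureTheory Finset

/-! ### Basic weight lemmas -/

lemma PBpathW_nonneg (N : ℕ) (a b : Fin N) : 0 ≤ pathW N a b := by
  unfold pathW; split_ifs <;> norm_num

lemma PBpermW2_nonneg (N : ℕ) (a b : Fin N) : 0 ≤ permW2 N a b := by
  unfold permW2; split_ifs <;> norm_num

lemma PBpathW_half (N : ℕ) (a b : Fin N)
    (h : b.val = a.val + 1 ∨ a.val = b.val + 1) (h1 : 1 ≤ a.val) (h2 : a.val ≤ N - 2) :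
    pathW N a b = 1/2 := by
  have := a.isLt
  unfold pathW
  rw [if_pos h, if_neg (by omega)]

lemma PBpathW_one (N : ℕ) (a b : Fin N)
    (h : b.val = a.val + 1 ∨ a.val = b.val + 1) (h0 : a.val = 0 ∨ a.val = N - 1) :
    pathW N a b = 1 := by
  unfold pathW; rw [if_pos h, if_pos h0]

lemma PBpermW2_half (N : ℕ) (hN : 8 ≤ N) (a b : Fin N)
    (h : b.val = a.val + 1 ∨ a.val = b.val + 1) (ha : a.val ≤ N - 3) :
    permW2 N a b = 1/2 := by
  have hbN := b.isLt; have haN := a.isLt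
  unfold permW2
  rw [if_pos, if_neg (by omega)]
  refine ⟨?_, by omega⟩
  rcases h with h | h
  · left; rw [← h]; exact Nat.mod_eq_of_lt (by omega)
  · right; rw [← h]; exact Nat.mod_eq_of_lt (by omega)

lemma PBpermW2_one (N : ℕ) (hN : 8 ≤ N) (a b : Fin N) (ha : a.val = N - 1) (hb : b.val = 0) :
    permW2 N a b = 1 := by
  unfold permW2
  rw [if_pos, if_pos (Or.inr ha)]
  refine ⟨Or.inl ?_, by omega⟩
  rw [ha, hb]
  have h1 : N - 1 + 1 = N := by omega
  rw [h1, Nat.mod_self]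

lemma PBpermW2_half0 (N : ℕ) (hN : 8 ≤ N) (a b : Fin N) (ha : a.val = 0) (hb : b.val = N - 1) :
    permW2 N a b = 1/2 := by
  unfold permW2
  rw [if_pos, if_neg (by omega)]
  refine ⟨Or.inr ?_, by omega⟩
  rw [ha, hb]
  have h1 : N - 1 + 1 = N := by omega
  rw [h1, Nat.mod_self]

lemma PBwP_nonneg (N : ℕ) : ∀ (k : Fin 2) (a b : Fin N),
    0 ≤ (if k = 0 then pathW N else permW2 N) a b := by
  intro k a b
  split_ifs
  · exact PBpathW_nonneg N a b
  · exact PBpermW2_nonneg N a b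

lemma PBwR_nonneg (N : ℕ) : ∀ (k : Fin 2) (a b : Fin N),
    0 ≤ (fun _ : Fin 2 => pathW N) k a b :=
  fun _ a b => PBpathW_nonneg N a b

lemma PBwP_half (N : ℕ) (hN : 8 ≤ N) : ∀ (k : Fin 2) (a b : Fin N),
    (b.val = a.val + 1 ∨ a.val = b.val + 1) → 2 ≤ a.val → a.val ≤ N - 4 →
    1/2 ≤ (if k = 0 then pathW N else permW2 N) a b := by
  intro k a b h h2 h4
  split_ifs
  · exact le_of_eq (PBpathW_half N a b h (by omega) (by omega)).symm
  · exact le_of_eq (PBpermW2_half N hN a b h (by omega)).symm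

lemma PBwR_half (N : ℕ) (hN : 8 ≤ N) : ∀ (k : Fin 2) (a b : Fin N),
    (b.val = a.val + 1 ∨ a.val = b.val + 1) → 2 ≤ a.val → a.val ≤ N - 4 →
    1/2 ≤ (fun _ : Fin 2 => pathW N) k a b := by
  intro k a b h h2 h4
  exact le_of_eq (PBpathW_half N a b h (by omega) (by omega)).symm

/-! ### LTM dynamics lemmas -/

lemma PBiter_subset {n m : ℕ} (w : Fin m → Fin n → Fin n → ℝ) (u : Fin n → Protocol)
    (μ : Fin n → Fin m → ℝ) : ∀ (s : ℕ) (A : Finset (Fin n)), A ⊆ (ltmStep w u μ)^[s] A := by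
  intro s
  induction s with
  | zero => intro A; rw [Function.iterate_zero_apply]
  | succ s ih =>
    intro A
    rw [Function.iterate_succ_apply]
    exact Finset.Subset.trans (Finset.subset_union_left) (ih (ltmStep w u μ A))

lemma PBspread {n m : ℕ} (w : Fin m → Fin n → Fin n → ℝ)
    (hw : ∀ k a b, 0 ≤ w k a b) (μ : Fin n → Fin m → ℝ)
    (S₀ : Finset (Fin n)) (c : ℕ → Fin n) (hc0 : c 0 ∈ S₀) (T : ℕ)
    (h : ∀ s, s < T → ∃ k, μ (c (s+1)) k < w k (c (s+1)) (c s)) :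
    ∀ s, s ≤ T → c s ∈ (ltmStep w (fun _ => Protocol.OR) μ)^[s] S₀ := by
  intro s
  induction s with
  | zero => intro _; simpa using hc0
  | succ s ih =>
    intro hs
    rw [Function.iterate_succ_apply']
    obtain ⟨k, hk⟩ := h s (by omega)
    apply Finset.mem_union_right
    rw [Finset.mem_filter]
    refine ⟨Finset.mem_univ _, Or.inl ⟨rfl, k, lt_of_lt_of_le hk ?_⟩⟩
    exact Finset.single_le_sum (f := fun y => w k (c (s+1)) y)
      (fun y _ => hw k _ y) (ih (by omega))

lemma PBreach {N : ℕ} (w : Fin 2 → Fin N → Fin N → ℝ)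
    (hw : ∀ k a b, 0 ≤ w k a b) (μ : Fin N → Fin 2 → ℝ)
    (j i : Fin N) (c : ℕ → Fin N) (hc0 : c 0 = j) (T : ℕ) (hT : T ≤ N) (hcT : c T = i)
    (h : ∀ s, s < T → ∃ k, μ (c (s+1)) k < w k (c (s+1)) (c s)) :
    i ∈ ltmSS w (fun _ => Protocol.OR) {j} μ := by
  have h1 : c 0 ∈ ({j} : Finset (Fin N)) := by rw [hc0]; exact Finset.mem_singleton_self j
  have h2 := PBspread w hw μ {j} c h1 T h T le_rfl
  rw [hcT] at h2
  show i ∈ (ltmStep w (fun _ => Protocol.OR) μ)^[N] {j}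
  have key : (ltmStep w (fun _ => Protocol.OR) μ)^[N - T + T] ({j} : Finset (Fin N)) =
      (ltmStep w (fun _ => Protocol.OR) μ)^[N] ({j} : Finset (Fin N)) := by
    rw [Nat.sub_add_cancel hT]
  rw [← key, Function.iterate_add_apply]
  exact PBiter_subset _ _ _ _ _ h2

/-! ### Chain spreading -/

lemma PBchain_up (N : ℕ) (hN : 8 ≤ N) (i j : Fin N) (hij : j.val < i.val)
    (hi2 : i.val ≤ N - 4) (hj1 : 1 ≤ j.val)
    (w : Fin 2 → Fin N → Fin N → ℝ) (hw0 : ∀ k a b, 0 ≤ w k a b)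
    (hw : ∀ (k : Fin 2) (a b : Fin N), (b.val = a.val + 1 ∨ a.val = b.val + 1) →
      2 ≤ a.val → a.val ≤ N - 4 → 1/2 ≤ w k a b)
    (μ : Fin N → Fin 2 → ℝ)
    (hμ : ∀ a : Fin N, j.val < a.val → a.val ≤ i.val → μ a 0 < 1/2 ∨ μ a 1 < 1/2) :
    i ∈ ltmSS w (fun _ => Protocol.OR) {j} μ := by
  have hiN := i.isLt
  have hjN := j.isLt
  set d := i.val - j.val with hd
  set c : ℕ → Fin N := fun s => ⟨j.val + min s d, by omega⟩ with hc
  have hcv : ∀ s, s ≤ d → (c s).val = j.val + s := by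
    intro s hs
    simp only [hc]
    rw [min_eq_left hs]
  refine PBreach w hw0 μ j i c (Fin.ext (by rw [hcv 0 (by omega)]; omega)) d (by omega)
    (Fin.ext (by rw [hcv d le_rfl]; omega)) ?_
  intro s hs
  have hr : (c (s+1)).val = j.val + (s + 1) := hcv (s+1) (by omega)
  have hp : (c s).val = j.val + s := hcv s (by omega)
  have hb1 : 2 ≤ (c (s+1)).val := by omega
  have hb2 : (c (s+1)).val ≤ N - 4 := by omega
  rcases hμ (c (s+1)) (by omega) (by omega) with h | h
  · exact ⟨0, lt_of_lt_of_le h (hw 0 _ _ (Or.inr (by omega)) hb1 hb2)⟩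
  · exact ⟨1, lt_of_lt_of_le h (hw 1 _ _ (Or.inr (by omega)) hb1 hb2)⟩

lemma PBchain_down (N : ℕ) (hN : 8 ≤ N) (i j : Fin N) (hij : i.val < j.val)
    (hi1 : 2 ≤ i.val) (hj2 : j.val ≤ N - 3)
    (w : Fin 2 → Fin N → Fin N → ℝ) (hw0 : ∀ k a b, 0 ≤ w k a b)
    (hw : ∀ (k : Fin 2) (a b : Fin N), (b.val = a.val + 1 ∨ a.val = b.val + 1) →
      2 ≤ a.val → a.val ≤ N - 4 → 1/2 ≤ w k a b)
    (μ : Fin N → Fin 2 → ℝ)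
    (hμ : ∀ a : Fin N, i.val ≤ a.val → a.val < j.val → μ a 0 < 1/2 ∨ μ a 1 < 1/2) :
    i ∈ ltmSS w (fun _ => Protocol.OR) {j} μ := by
  have hiN := i.isLt
  have hjN := j.isLt
  set d := j.val - i.val with hd
  set c : ℕ → Fin N := fun s => ⟨j.val - s, by omega⟩ with hc
  have hcv : ∀ s, (c s).val = j.val - s := fun s => rfl
  refine PBreach w hw0 μ j i c (Fin.ext (by rw [hcv 0]; omega)) d (by omega)
    (Fin.ext (by rw [hcv d]; omega)) ?_
  intro s hs
  have hr : (c (s+1)).val = j.val - (s + 1) := hcv (s+1)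
  have hp : (c s).val = j.val - s := hcv s
  have hb1 : 2 ≤ (c (s+1)).val := by omega
  have hb2 : (c (s+1)).val ≤ N - 4 := by omega
  rcases hμ (c (s+1)) (by omega) (by omega) with h | h
  · exact ⟨0, lt_of_lt_of_le h (hw 0 _ _ (Or.inl (by omega)) hb1 hb2)⟩
  · exact ⟨1, lt_of_lt_of_le h (hw 1 _ _ (Or.inl (by omega)) hb1 hb2)⟩

lemma PBlong_up (N : ℕ) (hN : 8 ≤ N) (i j : Fin N) (hij : j.val < i.val)
    (hi1 : 2 ≤ i.val) (hi2 : i.val ≤ N - 4) (hj1 : 1 ≤ j.val)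
    (μ : Fin N → Fin 2 → ℝ)
    (hμ : ∀ a : Fin N, (a.val < j.val ∨ i.val ≤ a.val) → μ a 0 < 1/2 ∧ μ a 1 < 1/2) :
    i ∈ ltmSS (fun k : Fin 2 => if k = 0 then pathW N else permW2 N)
      (fun _ => Protocol.OR) {j} μ := by
  have hiN := i.isLt
  have hjN := j.isLt
  set T := N - (i.val - j.val) with hT
  set c : ℕ → Fin N := fun s =>
    if h : s ≤ j.val then ⟨j.val - s, by omega⟩ else ⟨N + j.val - s, by omega⟩ with hc
  have hc1 : ∀ s, s ≤ j.val → (c s).val = j.val - s := by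
    intro s hs; simp only [hc]; rw [dif_pos hs]
  have hc2 : ∀ s, j.val < s → (c s).val = N + j.val - s := by
    intro s hs; simp only [hc]; rw [dif_neg (by omega)]
  have hw0eq : ∀ a b : Fin N,
      (if (0 : Fin 2) = 0 then pathW N else permW2 N) a b = pathW N a b := by
    intro a b; norm_num
  have hw1eq : ∀ a b : Fin N,
      (if (1 : Fin 2) = 0 then pathW N else permW2 N) a b = permW2 N a b := by
    intro a b; norm_num
  refine PBreach _ (PBwP_nonneg N) μ j i c (Fin.ext (by rw [hc1 0 (by omega)]; omega))
    T (by omega) (Fin.ext (by rw [hc2 T (by omega)]; omega)) ?_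
  intro s hs
  by_cases h1 : s + 1 ≤ j.val
  · have hr : (c (s+1)).val = j.val - (s+1) := hc1 _ h1
    have hp : (c s).val = j.val - s := hc1 _ (by omega)
    have hμr := hμ (c (s+1)) (Or.inl (by omega))
    refine ⟨0, lt_of_lt_of_le hμr.1 ?_⟩
    rw [hw0eq]
    by_cases h2 : j.val - (s+1) = 0
    · rw [PBpathW_one N _ _ (Or.inl (by omega)) (Or.inl (by omega))]
      norm_num
    · rw [PBpathW_half N _ _ (Or.inl (by omega)) (by omega) (by omega)]
  · by_cases h2 : s + 1 = j.val + 1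
    · have hr : (c (s+1)).val = N - 1 := by rw [hc2 (s+1) (by omega)]; omega
      have hp : (c s).val = 0 := by rw [hc1 s (by omega)]; omega
      have hμr := hμ (c (s+1)) (Or.inr (by omega))
      refine ⟨1, lt_of_lt_of_le hμr.2 ?_⟩
      rw [hw1eq, PBpermW2_one N hN _ _ hr hp]
      norm_num
    · have hr : (c (s+1)).val = N + j.val - (s+1) := hc2 _ (by omega)
      have hp : (c s).val = N + j.val - s := hc2 _ (by omega)
      have hμr := hμ (c (s+1)) (Or.inr (by omega))
      refine ⟨0, lt_of_lt_of_le hμr.1 ?_⟩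
      rw [hw0eq, PBpathW_half N _ _ (Or.inl (by omega)) (by omega) (by omega)]

lemma PBlong_down (N : ℕ) (hN : 8 ≤ N) (i j : Fin N) (hij : i.val < j.val)
    (hi1 : 2 ≤ i.val) (hi2 : i.val ≤ N - 4) (hj1 : 1 ≤ j.val) (hj2 : j.val ≤ N - 3)
    (μ : Fin N → Fin 2 → ℝ)
    (hμ : ∀ a : Fin N, (j.val < a.val ∨ a.val ≤ i.val) → μ a 0 < 1/2 ∧ μ a 1 < 1/2) :
    i ∈ ltmSS (fun k : Fin 2 => if k = 0 then pathW N else permW2 N)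
      (fun _ => Protocol.OR) {j} μ := by
  have hiN := i.isLt
  have hjN := j.isLt
  set T := N - (j.val - i.val) with hT
  set c : ℕ → Fin N := fun s =>
    if h : s ≤ N - 1 - j.val then ⟨j.val + s, by omega⟩
    else ⟨min (s - (N - j.val)) (N - 1), by omega⟩ with hc
  have hc1 : ∀ s, s ≤ N - 1 - j.val → (c s).val = j.val + s := by
    intro s hs; simp only [hc]; rw [dif_pos hs]
  have hc2 : ∀ s, N - 1 - j.val < s → s ≤ T → (c s).val = s - (N - j.val) := by
    intro s hs hs2; simp only [hc]; rw [dif_neg (by omega)]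
    show min (s - (N - j.val)) (N - 1) = s - (N - j.val)
    omega
  have hw0eq : ∀ a b : Fin N,
      (if (0 : Fin 2) = 0 then pathW N else permW2 N) a b = pathW N a b := by
    intro a b; norm_num
  have hw1eq : ∀ a b : Fin N,
      (if (1 : Fin 2) = 0 then pathW N else permW2 N) a b = permW2 N a b := by
    intro a b; norm_num
  refine PBreach _ (PBwP_nonneg N) μ j i c (Fin.ext (by rw [hc1 0 (by omega)]; omega))
    T (by omega) (Fin.ext (by rw [hc2 T (by omega) le_rfl]; omega)) ?_
  intro s hs
  by_cases h1 : s + 1 ≤ N - 1 - j.val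
  · -- receivers j+1 .. N-1 going up (layer 1)
    have hr : (c (s+1)).val = j.val + (s+1) := hc1 _ h1
    have hp : (c s).val = j.val + s := hc1 _ (by omega)
    have hμr := hμ (c (s+1)) (Or.inl (by omega))
    refine ⟨0, lt_of_lt_of_le hμr.1 ?_⟩
    rw [hw0eq]
    by_cases h2 : j.val + (s+1) = N - 1
    · rw [PBpathW_one N _ _ (Or.inr (by omega)) (Or.inr (by omega))]
      norm_num
    · rw [PBpathW_half N _ _ (Or.inr (by omega)) (by omega) (by omega)]
  · by_cases h2 : s + 1 = N - j.val
    · -- here s+1 = N - j: receiver 0, sender N-1 via layer 2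
      have hr : (c (s+1)).val = 0 := by rw [hc2 (s+1) (by omega) (by omega)]; omega
      have hp : (c s).val = j.val + s := hc1 s (by omega)
      have hμr := hμ (c (s+1)) (Or.inr (by omega))
      refine ⟨1, lt_of_lt_of_le hμr.2 ?_⟩
      rw [hw1eq, PBpermW2_half0 N hN _ _ hr (by omega)]
    · -- receivers 1 .. i from below
      have hr : (c (s+1)).val = (s+1) - (N - j.val) := hc2 _ (by omega) (by omega)
      have hp : (c s).val = s - (N - j.val) := hc2 _ (by omega) (by omega)
      have hμr := hμ (c (s+1)) (Or.inr (by omega))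
      refine ⟨0, lt_of_lt_of_le hμr.1 ?_⟩
      rw [hw0eq, PBpathW_half N _ _ (Or.inr (by omega)) (by omega) (by omega)]


lemma PBblock_up (N : ℕ) (hN : 8 ≤ N) (j : Fin N) (μ : Fin N → Fin 2 → ℝ)
    (hμ0 : ∀ b k, 0 ≤ μ b k) (a : Fin N) (ha1 : j.val < a.val) (ha2 : a.val ≤ N - 4)
    (hblk : ∀ k, 1/2 ≤ μ a k) :
    ∀ t, ∀ x ∈ (ltmStep (fun _ : Fin 2 => pathW N) (fun _ => Protocol.OR) μ)^[t] {j},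
      x.val < a.val := by
  have haN := a.isLt
  intro t
  induction t with
  | zero =>
    intro x hx
    rw [Function.iterate_zero_apply, Finset.mem_singleton] at hx
    rw [hx]; exact ha1
  | succ t ih =>
    intro x hx
    rw [Function.iterate_succ_apply'] at hx
    set S := (ltmStep (fun _ : Fin 2 => pathW N) (fun _ => Protocol.OR) μ)^[t] {j} with hS
    rcases Finset.mem_union.mp hx with hx | hx
    · exact ih x hx
    · rw [Finset.mem_filter] at hx
      rcases hx.2 with ⟨_, k, hk⟩ | ⟨hOA, _⟩
      swap
      · simp at hOA
      by_contra hxa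
      push_neg at hxa
      rcases eq_or_lt_of_le hxa with heq | hlt
      · -- x = a
        have hxa' : x = a := Fin.ext heq.symm
        subst hxa'
        set a' : Fin N := ⟨x.val - 1, by omega⟩ with ha'
        have hsum : ∑ y ∈ S, pathW N x y ≤ ∑ y ∈ S, (if y = a' then (1/2:ℝ) else 0) := by
          apply Finset.sum_le_sum
          intro y hy
          have hyv := ih y hy
          by_cases hya : y = a'
          · rw [if_pos hya, hya,
              PBpathW_half N x a' (Or.inr (by simp only [ha']; omega)) (by omega) (by omega)]
          · rw [if_neg hya]
            have hz : pathW N x y = 0 := by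
              unfold pathW
              rw [if_neg]
              rintro (h | h)
              · omega
              · exact hya (Fin.ext (by simp only [ha']; omega))
            rw [hz]
        rw [Finset.sum_ite_eq' S a' (fun _ => (1/2:ℝ))] at hsum
        have hlt2 : μ x k < 1/2 := by
          refine lt_of_lt_of_le hk (le_trans hsum ?_)
          split_ifs <;> norm_num
        exact absurd hlt2 (not_lt.mpr (hblk k))
      · have hsum : ∑ y ∈ S, pathW N x y = 0 := by
          apply Finset.sum_eq_zero
          intro y hy
          have hyv := ih y hy
          unfold pathW
          rw [if_neg]
          rintro (h | h) <;> omega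
        rw [hsum] at hk
        exact absurd hk (not_lt.mpr (hμ0 x k))

lemma PBblock_down (N : ℕ) (hN : 8 ≤ N) (j : Fin N) (μ : Fin N → Fin 2 → ℝ)
    (hμ0 : ∀ b k, 0 ≤ μ b k) (a : Fin N) (ha1 : a.val < j.val) (ha2 : 2 ≤ a.val)
    (hblk : ∀ k, 1/2 ≤ μ a k) :
    ∀ t, ∀ x ∈ (ltmStep (fun _ : Fin 2 => pathW N) (fun _ => Protocol.OR) μ)^[t] {j},
      a.val < x.val := by
  have haN := a.isLt
  have hjN := j.isLt
  intro t
  induction t with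
  | zero =>
    intro x hx
    rw [Function.iterate_zero_apply, Finset.mem_singleton] at hx
    rw [hx]; exact ha1
  | succ t ih =>
    intro x hx
    rw [Function.iterate_succ_apply'] at hx
    set S := (ltmStep (fun _ : Fin 2 => pathW N) (fun _ => Protocol.OR) μ)^[t] {j} with hS
    rcases Finset.mem_union.mp hx with hx | hx
    · exact ih x hx
    · rw [Finset.mem_filter] at hx
      rcases hx.2 with ⟨_, k, hk⟩ | ⟨hOA, _⟩
      swap
      · simp at hOA
      by_contra hxa
      push_neg at hxa
      rcases eq_or_lt_of_le hxa with heq | hlt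
      · -- x = a
        have hxa' : x = a := Fin.ext heq
        subst hxa'
        set a' : Fin N := ⟨x.val + 1, by omega⟩ with ha'
        have hsum : ∑ y ∈ S, pathW N x y ≤ ∑ y ∈ S, (if y = a' then (1/2:ℝ) else 0) := by
          apply Finset.sum_le_sum
          intro y hy
          have hyv := ih y hy
          by_cases hya : y = a'
          · rw [if_pos hya, hya,
              PBpathW_half N x a' (Or.inl (by simp only [ha'])) (by omega) (by omega)]
          · rw [if_neg hya]
            have hz : pathW N x y = 0 := by
              unfold pathW
              rw [if_neg]
              rintro (h | h)
              · exact hya (Fin.ext (by simp only [ha']; omega))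
              · omega
            rw [hz]
        rw [Finset.sum_ite_eq' S a' (fun _ => (1/2:ℝ))] at hsum
        have hlt2 : μ x k < 1/2 := by
          refine lt_of_lt_of_le hk (le_trans hsum ?_)
          split_ifs <;> norm_num
        exact absurd hlt2 (not_lt.mpr (hblk k))
      · have hsum : ∑ y ∈ S, pathW N x y = 0 := by
          apply Finset.sum_eq_zero
          intro y hy
          have hyv := ih y hy
          unfold pathW
          rw [if_neg]
          rintro (h | h) <;> omega
        rw [hsum] at hk
        exact absurd hk (not_lt.mpr (hμ0 x k))


/-! ### Measure theory infrastructure -/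

noncomputable def PBm1 : Measure ℝ := volume.restrict (Set.Icc 0 1)

instance : IsProbabilityMeasure (volume.restrict (Set.Icc (0:ℝ) 1)) :=
  ⟨by rw [Measure.restrict_apply_univ, Real.volume_Icc]; norm_num⟩

instance : IsProbabilityMeasure PBm1 := by unfold PBm1; infer_instance

noncomputable def PBν : Measure (Fin 2 → ℝ) := Measure.pi fun _ => PBm1

instance : IsProbabilityMeasure PBν := by unfold PBν; infer_instance

instance (n m : ℕ) : IsProbabilityMeasure (thMeasure n m) := by
  unfold thMeasure; infer_instance

def PBOr : Set (Fin 2 → ℝ) := {g | g 0 < 1/2 ∨ g 1 < 1/2}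
def PBBoth : Set (Fin 2 → ℝ) := {g | g 0 < 1/2 ∧ g 1 < 1/2}
def PBBlk : Set (Fin 2 → ℝ) := {g | 1/2 ≤ g 0 ∧ 1/2 ≤ g 1}

lemma PBBlk_meas : MeasurableSet PBBlk :=
  (measurableSet_le measurable_const (measurable_pi_apply 0)).inter
    (measurableSet_le measurable_const (measurable_pi_apply 1))

lemma PBBoth_meas : MeasurableSet PBBoth :=
  (measurableSet_lt (measurable_pi_apply 0) measurable_const).inter
    (measurableSet_lt (measurable_pi_apply 1) measurable_const)

lemma PBm1_apply (s : Set ℝ) (hs : MeasurableSet s) : PBm1 s = volume (s ∩ Set.Icc 0 1) :=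
  Measure.restrict_apply hs

lemma PBm1_Ici : PBm1 (Set.Ici (1/2 : ℝ)) = ENNReal.ofReal (1/2) := by
  rw [PBm1_apply _ measurableSet_Ici]
  have h : Set.Ici (1/2:ℝ) ∩ Set.Icc 0 1 = Set.Icc (1/2) 1 := by
    ext x
    simp only [Set.mem_inter_iff, Set.mem_Ici, Set.mem_Icc]
    constructor
    · rintro ⟨h1, _, h3⟩; exact ⟨h1, h3⟩
    · rintro ⟨h1, h2⟩; exact ⟨h1, by linarith, h2⟩
  rw [h, Real.volume_Icc]
  norm_num

lemma PBm1_Iio : PBm1 (Set.Iio (1/2 : ℝ)) = ENNReal.ofReal (1/2) := by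
  rw [PBm1_apply _ measurableSet_Iio]
  have h : Set.Iio (1/2:ℝ) ∩ Set.Icc 0 1 = Set.Ico 0 (1/2) := by
    ext x
    simp only [Set.mem_inter_iff, Set.mem_Iio, Set.mem_Icc, Set.mem_Ico]
    constructor
    · rintro ⟨h1, h2, _⟩; exact ⟨h2, h1⟩
    · rintro ⟨h1, h2⟩; exact ⟨h2, h1, by linarith⟩
  rw [h, Real.volume_Ico]
  norm_num

lemma PBm1_neg : PBm1 (Set.Iio (0:ℝ)) = 0 := by
  rw [PBm1_apply _ measurableSet_Iio]
  have h : Set.Iio (0:ℝ) ∩ Set.Icc 0 1 = ∅ := by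
    refine Set.eq_empty_iff_forall_notMem.mpr fun x hx => ?_
    obtain ⟨h1, h2, _⟩ := hx
    exact absurd h1 (not_lt.mpr h2)
  rw [h]
  simp

lemma PBν_pi (t : Fin 2 → Set ℝ) : PBν (Set.pi Set.univ t) = PBm1 (t 0) * PBm1 (t 1) := by
  rw [PBν, Measure.pi_pi, Fin.prod_univ_two]

lemma PBν_Blk : PBν PBBlk = ENNReal.ofReal (1/4) := by
  have h : PBBlk = Set.pi Set.univ (fun _ : Fin 2 => Set.Ici (1/2:ℝ)) := by
    ext g
    constructor
    · rintro ⟨h0, h1⟩ k _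
      fin_cases k
      · exact h0
      · exact h1
    · intro h
      exact ⟨h 0 (Set.mem_univ _), h 1 (Set.mem_univ _)⟩
  rw [h, PBν_pi, PBm1_Ici, ← ENNReal.ofReal_mul (by norm_num)]
  norm_num

lemma PBν_Both : PBν PBBoth = ENNReal.ofReal (1/4) := by
  have h : PBBoth = Set.pi Set.univ (fun _ : Fin 2 => Set.Iio (1/2:ℝ)) := by
    ext g
    constructor
    · rintro ⟨h0, h1⟩ k _
      fin_cases k
      · exact h0
      · exact h1
    · intro h
      exact ⟨h 0 (Set.mem_univ _), h 1 (Set.mem_univ _)⟩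
  rw [h, PBν_pi, PBm1_Iio, ← ENNReal.ofReal_mul (by norm_num)]
  norm_num

lemma PBν_Or : PBν PBOr = ENNReal.ofReal (3/4) := by
  have h : PBOr = PBBlkᶜ := by
    ext g
    constructor
    · rintro (h | h) hc
      · exact absurd h (not_lt.mpr hc.1)
      · exact absurd h (not_lt.mpr hc.2)
    · intro h
      by_cases h0 : g 0 < 1/2
      · exact Or.inl h0
      · right
        by_contra h1
        exact h ⟨not_lt.mp h0, not_lt.mp h1⟩
  rw [h, measure_compl PBBlk_meas (measure_ne_top _ _), measure_univ, PBν_Blk,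
    ← ENNReal.ofReal_one, ← ENNReal.ofReal_sub _ (by norm_num)]
  norm_num

lemma PBν_neg (k : Fin 2) : PBν {g : Fin 2 → ℝ | g k < 0} = 0 := by
  have h : {g : Fin 2 → ℝ | g k < 0}
      = Set.pi Set.univ (fun x => if x = k then Set.Iio 0 else Set.univ) := by
    ext g
    simp only [Set.mem_univ_pi, Set.mem_setOf_eq]
    constructor
    · intro hg x
      split_ifs with hx
      · subst hx; exact hg
      · trivial
    · intro hg
      have h2 := hg k
      rwa [if_pos rfl] at h2
  rw [h, PBν_pi]
  fin_cases k <;> simp [PBm1_neg]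

lemma PBthM_pi (N : ℕ) (t : Fin N → Set (Fin 2 → ℝ)) :
    thMeasure N 2 (Set.pi Set.univ t) = ∏ a, PBν (t a) := by
  have h : thMeasure N 2 = Measure.pi (fun _ : Fin N => PBν) := rfl
  rw [h, Measure.pi_pi]

lemma PBcard (N lo hi : ℕ) (hhi : hi < N) :
    (Finset.univ.filter fun a : Fin N => lo ≤ a.val ∧ a.val ≤ hi).card = hi + 1 - lo := by
  have hN0 : 0 < N := by omega
  rw [← Nat.card_Icc lo hi]
  apply Finset.card_nbij' (i := fun a : Fin N => a.val)
    (j := fun x : ℕ => (⟨x % N, Nat.mod_lt _ hN0⟩ : Fin N))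
  · intro a ha
    rw [Finset.mem_coe, Finset.mem_filter] at ha
    rw [Finset.mem_coe, Finset.mem_Icc]
    exact ha.2
  · intro x hx
    rw [Finset.mem_coe, Finset.mem_Icc] at hx
    have hxN : x < N := by omega
    rw [Finset.mem_coe, Finset.mem_filter]
    refine ⟨Finset.mem_univ _, ?_⟩
    show lo ≤ x % N ∧ x % N ≤ hi
    rw [Nat.mod_eq_of_lt hxN]
    exact hx
  · intro a _
    exact Fin.ext (Nat.mod_eq_of_lt a.isLt)
  · intro x hx
    rw [Finset.mem_coe, Finset.mem_Icc] at hx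
    show x % N = x
    exact Nat.mod_eq_of_lt (by omega)

lemma PB_neg_null (N : ℕ) : thMeasure N 2 {μ : Fin N → Fin 2 → ℝ | ∃ b k, μ b k < 0} = 0 := by
  have h : {μ : Fin N → Fin 2 → ℝ | ∃ b k, μ b k < 0}
      = ⋃ b : Fin N, ⋃ k : Fin 2, {μ | μ b k < 0} := by
    ext μ; simp
  rw [h]
  refine measure_iUnion_null fun b => measure_iUnion_null fun k => ?_
  have h2 : {μ : Fin N → Fin 2 → ℝ | μ b k < 0}
      = Set.pi Set.univ (fun x => if x = b then {g : Fin 2 → ℝ | g k < 0} else Set.univ) := by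
    ext μ
    simp only [Set.mem_univ_pi, Set.mem_setOf_eq]
    constructor
    · intro hμ x
      split_ifs with hx
      · subst hx; exact hμ
      · trivial
    · intro hμ
      have h3 := hμ b
      rwa [if_pos rfl] at h3
  rw [h2, PBthM_pi]
  apply Finset.prod_eq_zero (Finset.mem_univ b)
  rw [if_pos rfl, PBν_neg]

def PBCset (N lo hi : ℕ) : Set (Fin N → Fin 2 → ℝ) :=
  Set.pi Set.univ fun a => if lo ≤ a.val ∧ a.val ≤ hi then PBOr else Set.univ

lemma PBCset_mem (N lo hi : ℕ) (μ : Fin N → Fin 2 → ℝ) :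
    μ ∈ PBCset N lo hi ↔
      ∀ a : Fin N, lo ≤ a.val → a.val ≤ hi → (μ a 0 < 1/2 ∨ μ a 1 < 1/2) := by
  constructor
  · intro h a h1 h2
    have h3 : μ a ∈ (if lo ≤ a.val ∧ a.val ≤ hi then PBOr else Set.univ) :=
      h a (Set.mem_univ a)
    rw [if_pos ⟨h1, h2⟩] at h3
    exact h3
  · intro h a _
    show μ a ∈ (if lo ≤ a.val ∧ a.val ≤ hi then PBOr else Set.univ)
    split_ifs with hh
    · exact h a hh.1 hh.2
    · trivial

lemma PBCset_meas (N lo hi : ℕ) (hhi : hi < N) :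
    thMeasure N 2 (PBCset N lo hi) = ENNReal.ofReal ((3/4 : ℝ) ^ (hi + 1 - lo)) := by
  unfold PBCset
  rw [PBthM_pi]
  have h1 : ∀ a : Fin N, PBν (if lo ≤ a.val ∧ a.val ≤ hi then PBOr else Set.univ)
      = if lo ≤ a.val ∧ a.val ≤ hi then ENNReal.ofReal (3/4) else 1 := by
    intro a; split_ifs
    · exact PBν_Or
    · exact measure_univ
  rw [Finset.prod_congr rfl fun a _ => h1 a, Finset.prod_ite, Finset.prod_const,
    Finset.prod_const, one_pow, mul_one, PBcard N lo hi hhi,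
    ← ENNReal.ofReal_pow (by norm_num)]

def PBDset (N : ℕ) (L : Fin N → Prop) [DecidablePred L] (a₀ : Fin N) :
    Set (Fin N → Fin 2 → ℝ) :=
  Set.pi Set.univ fun a => if a = a₀ then PBBlk else if L a then PBBoth else Set.univ

lemma PBDset_blk (N : ℕ) (L : Fin N → Prop) [DecidablePred L] (a₀ : Fin N)
    (μ : Fin N → Fin 2 → ℝ) (hμ : μ ∈ PBDset N L a₀) : 1/2 ≤ μ a₀ 0 ∧ 1/2 ≤ μ a₀ 1 := by
  have h : μ a₀ ∈ (if a₀ = a₀ then PBBlk else if L a₀ then PBBoth else Set.univ) :=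
    hμ a₀ (Set.mem_univ a₀)
  rwa [if_pos rfl] at h

lemma PBDset_both (N : ℕ) (L : Fin N → Prop) [DecidablePred L] (a₀ : Fin N)
    (ha₀L : ¬ L a₀) (μ : Fin N → Fin 2 → ℝ) (hμ : μ ∈ PBDset N L a₀) (a : Fin N)
    (ha : L a) : μ a 0 < 1/2 ∧ μ a 1 < 1/2 := by
  have h : μ a ∈ (if a = a₀ then PBBlk else if L a then PBBoth else Set.univ) :=
    hμ a (Set.mem_univ a)
  rw [if_neg, if_pos ha] at h
  · exact h
  · rintro rfl; exact ha₀L ha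

lemma PBDset_mble (N : ℕ) (L : Fin N → Prop) [DecidablePred L] (a₀ : Fin N) :
    MeasurableSet (PBDset N L a₀) := by
  apply MeasurableSet.pi Set.countable_univ
  intro a _
  split_ifs
  · exact PBBlk_meas
  · exact PBBoth_meas
  · exact MeasurableSet.univ

lemma PBDset_ne_zero (N : ℕ) (L : Fin N → Prop) [DecidablePred L] (a₀ : Fin N) :
    thMeasure N 2 (PBDset N L a₀) ≠ 0 := by
  unfold PBDset
  rw [PBthM_pi, Finset.prod_ne_zero_iff]
  intro a _
  split_ifs
  · rw [PBν_Blk]; exact (ENNReal.ofReal_pos.mpr (by norm_num)).ne'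
  · rw [PBν_Both]; exact (ENNReal.ofReal_pos.mpr (by norm_num)).ne'
  · rw [measure_univ]; exact one_ne_zero


lemma PB_main (N : ℕ) (hN : 8 ≤ N) (i j : Fin N) (lo hi : ℕ) (hhi : hi < N)
    (L : Fin N → Prop) [DecidablePred L] (a₀ : Fin N)
    (ha₀c : lo ≤ a₀.val ∧ a₀.val ≤ hi) (ha₀L : ¬ L a₀)
    (hER1 : ∀ μ : Fin N → Fin 2 → ℝ,
      (∀ a : Fin N, lo ≤ a.val → a.val ≤ hi → μ a 0 < 1/2 ∨ μ a 1 < 1/2) →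
      i ∈ ltmSS (fun _ : Fin 2 => pathW N) (fun _ => Protocol.OR) {j} μ)
    (hER2 : ∀ μ : Fin N → Fin 2 → ℝ, (∀ b k, 0 ≤ μ b k) →
      i ∈ ltmSS (fun _ : Fin 2 => pathW N) (fun _ => Protocol.OR) {j} μ →
      ∀ a : Fin N, lo ≤ a.val → a.val ≤ hi → μ a 0 < 1/2 ∨ μ a 1 < 1/2)
    (hEP1 : ∀ μ : Fin N → Fin 2 → ℝ,
      (∀ a : Fin N, lo ≤ a.val → a.val ≤ hi → μ a 0 < 1/2 ∨ μ a 1 < 1/2) →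
      i ∈ ltmSS (fun k : Fin 2 => if k = 0 then pathW N else permW2 N)
        (fun _ => Protocol.OR) {j} μ)
    (hEP2 : ∀ μ : Fin N → Fin 2 → ℝ,
      (∀ a : Fin N, L a → μ a 0 < 1/2 ∧ μ a 1 < 1/2) →
      i ∈ ltmSS (fun k : Fin 2 => if k = 0 then pathW N else permW2 N)
        (fun _ => Protocol.OR) {j} μ) :
    (pLTM (fun k : Fin 2 => if k = 0 then pathW N else permW2 N)
        (fun _ => Protocol.OR) {j} i >
      pLTM (fun _ : Fin 2 => pathW N) (fun _ => Protocol.OR) {j} i) ∧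
    pLTM (fun _ : Fin 2 => pathW N) (fun _ => Protocol.OR) {j} i
      = (3/4 : ℝ) ^ (hi + 1 - lo) := by
  classical
  set ER : Set (Fin N → Fin 2 → ℝ) :=
    {μ | i ∈ ltmSS (fun _ : Fin 2 => pathW N) (fun _ => Protocol.OR) {j} μ} with hERdef
  set EP : Set (Fin N → Fin 2 → ℝ) :=
    {μ | i ∈ ltmSS (fun k : Fin 2 => if k = 0 then pathW N else permW2 N)
      (fun _ => Protocol.OR) {j} μ} with hEPdef
  have hpR : pLTM (fun _ : Fin 2 => pathW N) (fun _ => Protocol.OR) {j} i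
      = (thMeasure N 2 ER).toReal := rfl
  have hpP : pLTM (fun k : Fin 2 => if k = 0 then pathW N else permW2 N)
      (fun _ => Protocol.OR) {j} i = (thMeasure N 2 EP).toReal := rfl
  have hCsubER : PBCset N lo hi ⊆ ER := fun μ hμ => hER1 μ ((PBCset_mem N lo hi μ).1 hμ)
  have hCsubEP : PBCset N lo hi ⊆ EP := fun μ hμ => hEP1 μ ((PBCset_mem N lo hi μ).1 hμ)
  have hDsubEP : PBDset N L a₀ ⊆ EP :=
    fun μ hμ => hEP2 μ (fun a hLa => PBDset_both N L a₀ ha₀L μ hμ a hLa)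
  have hdisj : Disjoint (PBCset N lo hi) (PBDset N L a₀) := by
    rw [Set.disjoint_left]
    intro μ hC hD
    have h1 := (PBCset_mem N lo hi μ).1 hC a₀ ha₀c.1 ha₀c.2
    have h2 := PBDset_blk N L a₀ μ hD
    rcases h1 with h | h
    · exact absurd h (not_lt.mpr h2.1)
    · exact absurd h (not_lt.mpr h2.2)
  have hERle : thMeasure N 2 ER ≤ thMeasure N 2 (PBCset N lo hi) := by
    have hsub : ER ⊆ PBCset N lo hi ∪ {μ | ∃ b k, μ b k < 0} := by
      intro μ hμ
      by_cases hpos : ∀ b k, 0 ≤ μ b k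
      · exact Or.inl ((PBCset_mem N lo hi μ).2 (hER2 μ hpos hμ))
      · push_neg at hpos
        obtain ⟨b, k, hbk⟩ := hpos
        exact Or.inr ⟨b, k, hbk⟩
    calc thMeasure N 2 ER ≤ thMeasure N 2 (PBCset N lo hi ∪ {μ | ∃ b k, μ b k < 0}) :=
          measure_mono hsub
      _ ≤ thMeasure N 2 (PBCset N lo hi) + thMeasure N 2 {μ | ∃ b k, μ b k < 0} :=
          measure_union_le _ _
      _ = thMeasure N 2 (PBCset N lo hi) := by rw [PB_neg_null N, add_zero]
  have hEReq : thMeasure N 2 ER = thMeasure N 2 (PBCset N lo hi) :=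
    le_antisymm hERle (measure_mono hCsubER)
  have hfinC := measure_ne_top (thMeasure N 2) (PBCset N lo hi)
  have hfinD := measure_ne_top (thMeasure N 2) (PBDset N L a₀)
  have hEPge : thMeasure N 2 (PBCset N lo hi) + thMeasure N 2 (PBDset N L a₀)
      ≤ thMeasure N 2 EP := by
    rw [← measure_union hdisj (PBDset_mble N L a₀)]
    exact measure_mono (Set.union_subset hCsubEP hDsubEP)
  constructor
  · rw [hpP, hpR, hEReq]
    have h1 : (thMeasure N 2 (PBCset N lo hi)).toReal + (thMeasure N 2 (PBDset N L a₀)).toReal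
        ≤ (thMeasure N 2 EP).toReal := by
      rw [← ENNReal.toReal_add hfinC hfinD]
      exact ENNReal.toReal_mono (measure_ne_top _ _) hEPge
    have h2 : 0 < (thMeasure N 2 (PBDset N L a₀)).toReal :=
      ENNReal.toReal_pos (PBDset_ne_zero N L a₀) hfinD
    linarith
  · rw [hpR, hEReq, PBCset_meas N lo hi hhi, ENNReal.toReal_ofReal (by positivity)]


end PBAux

/-- under Protocol OR the permutation network spreads strictly more
than the repeated path network: for `N ≥ 8`, seed `{j}`, indices as in Statement 10
with additionally `|i−j| > 2`,
ℙ^{𝒢_P, OR}(i) > ℙ^{𝒢_R, OR}(i) = (3/4)^{|i−j|}; equivalently,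
(3/4)^{|i−j|} + (1/2)(3/4)^{N−|i−j|−3} − (1/2)(3/4)^{N−5} > (3/4)^{|i−j|}. -/
theorem permutation_beats_repeated_path_OR (N : ℕ) (hN : 8 ≤ N) (i j : Fin N)
    (hi1 : 2 ≤ i.val) (hi2 : i.val ≤ N - 4)
    (hj1 : 1 ≤ j.val) (hj2 : j.val ≤ N - 3)
    (hd : 2 < Nat.dist i.val j.val) :
    (pLTM (fun k : Fin 2 => if k = 0 then pathW N else permW2 N)
        (fun _ => Protocol.OR) {j} i >
      pLTM (fun _ : Fin 2 => pathW N) (fun _ => Protocol.OR) {j} i) ∧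
    (pLTM (fun _ : Fin 2 => pathW N) (fun _ => Protocol.OR) {j} i =
      (3/4 : ℝ) ^ (Nat.dist i.val j.val)) ∧
    ((3/4 : ℝ) ^ (Nat.dist i.val j.val) +
        (1/2 : ℝ) * (3/4 : ℝ) ^ (N - Nat.dist i.val j.val - 3) -
        (1/2 : ℝ) * (3/4 : ℝ) ^ (N - 5) >
      (3/4 : ℝ) ^ (Nat.dist i.val j.val)) := by
  have hdd : Nat.dist i.val j.val = i.val - j.val + (j.val - i.val) := rfl
  have hiN := i.isLt
  have hjN := j.isLt
  have h3 : (3/4 : ℝ) ^ (Nat.dist i.val j.val) +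
      (1/2 : ℝ) * (3/4 : ℝ) ^ (N - Nat.dist i.val j.val - 3) -
      (1/2 : ℝ) * (3/4 : ℝ) ^ (N - 5) > (3/4 : ℝ) ^ (Nat.dist i.val j.val) := by
    have hpow := pow_lt_pow_right_of_lt_one₀ (show (0:ℝ) < 3/4 by norm_num)
      (show (3/4:ℝ) < 1 by norm_num)
      (show N - Nat.dist i.val j.val - 3 < N - 5 by omega)
    linarith
  rcases Nat.lt_trichotomy j.val i.val with hij | hij | hij
  · -- j < i
    have hkey := PB_main N hN i j (j.val + 1) i.val i.isLt
      (fun a : Fin N => a.val < j.val ∨ i.val ≤ a.val)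
      (⟨j.val + 1, by omega⟩ : Fin N)
      ⟨le_rfl, by show j.val + 1 ≤ i.val; omega⟩
      (by show ¬(j.val + 1 < j.val ∨ i.val ≤ j.val + 1); omega)
      (fun μ h => PBchain_up N hN i j hij hi2 hj1 _ (PBwR_nonneg N) (PBwR_half N hN) μ
        (fun a h1 h2 => h a (by omega) h2))
      (fun μ hpos hss a h1 h2 => by
        by_contra hcon
        push_neg at hcon
        have hblk : ∀ k : Fin 2, 1/2 ≤ μ a k := Fin.forall_fin_two.mpr ⟨hcon.1, hcon.2⟩
        have hres := PBblock_up N hN j μ hpos a (by omega) (by omega) hblk N i hss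
        omega)
      (fun μ h => PBchain_up N hN i j hij hi2 hj1 _ (PBwP_nonneg N) (PBwP_half N hN) μ
        (fun a h1 h2 => h a (by omega) h2))
      (fun μ h => PBlong_up N hN i j hij hi1 hi2 hj1 μ (fun a ha => h a ha))
    have hexp : i.val + 1 - (j.val + 1) = Nat.dist i.val j.val := by omega
    rw [hexp] at hkey
    exact ⟨hkey.1, hkey.2, h3⟩
  · exact absurd hd (by omega)
  · -- i < j
    have hkey := PB_main N hN i j i.val (j.val - 1) (by omega)
      (fun a : Fin N => j.val < a.val ∨ a.val ≤ i.val)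
      (⟨i.val + 1, by omega⟩ : Fin N)
      ⟨by show i.val ≤ i.val + 1; omega, by show i.val + 1 ≤ j.val - 1; omega⟩
      (by show ¬(j.val < i.val + 1 ∨ i.val + 1 ≤ i.val); omega)
      (fun μ h => PBchain_down N hN i j hij hi1 hj2 _ (PBwR_nonneg N) (PBwR_half N hN) μ
        (fun a h1 h2 => h a h1 (by omega)))
      (fun μ hpos hss a h1 h2 => by
        by_contra hcon
        push_neg at hcon
        have hblk : ∀ k : Fin 2, 1/2 ≤ μ a k := Fin.forall_fin_two.mpr ⟨hcon.1, hcon.2⟩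
        have hres := PBblock_down N hN j μ hpos a (by omega) (by omega) hblk N i hss
        omega)
      (fun μ h => PBchain_down N hN i j hij hi1 hj2 _ (PBwP_nonneg N) (PBwP_half N hN) μ
        (fun a h1 h2 => h a h1 (by omega)))
      (fun μ h => PBlong_down N hN i j hij hi1 hi2 hj1 hj2 μ (fun a ha => h a ha))
    have hexp : j.val - 1 + 1 - i.val = Nat.dist i.val j.val := by omega
    rw [hexp] at hkey
    exact ⟨hkey.1, hkey.2, h3⟩
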